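/- arXiv:2105.10348 — 3 statements merged into one kernel-verified Lean document; each statement's English description precedes it below -/
import Mathlib

section
/- Let M > 0. Let Ψ^∞ be a function on {W : Im W > M} with Ψ^∞(W) − W → c_0^∞ as Im W → +∞, and let Ψ^0 be a function on {W : Im W < −M} with Ψ^0(W) − W → c_0^0 as Im W → −∞, for some constants c_0^∞, c_0^0 ∈ ℂ. Suppose the functional equation Ψ^∞(conj(W) + 1/2) = conj(Ψ^0(W)) + 1/2 holds for all W with Im W < −M. Then c_0^∞ = conj(c_0^0). Consequently, if in addition c_0^∞ − c_0^0 = −2πib for some b ∈ ℝ, then Im(c_0^∞) = −πb. -/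
open Complex Filter

/-- If `Ψ^∞(W) − W → c₀^∞` as `Im W → +∞`, `Ψ⁰(W) − W → c₀⁰` as `Im W → −∞`, and the
compatibility equation `Ψ^∞(conj W + 1/2) = conj (Ψ⁰ W) + 1/2` holds for `Im W < −M`,
then `c₀^∞ = conj c₀⁰`; consequently, if moreover `c₀^∞ − c₀⁰ = −2πib` with `b` real,
then `Im c₀^∞ = −πb`. -/
theorem constant_terms_conjugate (M : ℝ) (hM : 0 < M) (Ψinf Ψ0 : ℂ → ℂ)
    (c0inf c00 : ℂ)
    (hinf : Tendsto (fun W : ℂ => Ψinf W - W) (comap Complex.im atTop) (nhds c0inf))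
    (h0 : Tendsto (fun W : ℂ => Ψ0 W - W) (comap Complex.im atBot) (nhds c00))
    (heq : ∀ W : ℂ, W.im < -M →
      Ψinf ((starRingEnd ℂ) W + 1 / 2) = (starRingEnd ℂ) (Ψ0 W) + 1 / 2) :
    c0inf = (starRingEnd ℂ) c00 ∧
    (∀ b : ℝ, c0inf - c00 = -(2 * (Real.pi : ℂ) * Complex.I * (b : ℂ)) →
      c0inf.im = -(Real.pi * b)) := by
  have key : c0inf = (starRingEnd ℂ) c00 := by
    set f : ℝ → ℂ := fun t => -(t : ℂ) * Complex.I with hf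
    have him : ∀ t : ℝ, (f t).im = -t := by
      intro t; simp [hf]
    have hfbot : Tendsto f atTop (comap Complex.im atBot) := by
      rw [tendsto_comap_iff]
      have : (Complex.im ∘ f) = fun t => -t := funext him
      rw [this]
      exact tendsto_neg_atBot_iff.mpr tendsto_id
    have hgtop : Tendsto (fun t => (starRingEnd ℂ) (f t) + 1 / 2) atTop
        (comap Complex.im atTop) := by
      rw [tendsto_comap_iff]
      have : ∀ t : ℝ, ((starRingEnd ℂ) (f t) + 1 / 2).im = t := by
        intro t; simp [hf]
      have h3 : (Complex.im ∘ fun t => (starRingEnd ℂ) (f t) + 1 / 2) = fun t => t := by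
        funext t; simpa using this t
      rw [h3]; exact tendsto_id
    have h1 : Tendsto (fun t => Ψinf ((starRingEnd ℂ) (f t) + 1 / 2) -
        ((starRingEnd ℂ) (f t) + 1 / 2)) atTop (nhds c0inf) := hinf.comp hgtop
    have h2 : Tendsto (fun t => (starRingEnd ℂ) (Ψ0 (f t) - f t)) atTop
        (nhds ((starRingEnd ℂ) c00)) :=
      (Complex.continuous_conj.continuousAt.tendsto).comp (h0.comp hfbot)
    have heventually : ∀ᶠ t in (atTop : Filter ℝ),
        Ψinf ((starRingEnd ℂ) (f t) + 1 / 2) - ((starRingEnd ℂ) (f t) + 1 / 2)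
          = (starRingEnd ℂ) (Ψ0 (f t) - f t) := by
      filter_upwards [eventually_gt_atTop M] with t ht
      have h := heq (f t) (by rw [him t]; linarith)
      rw [h, map_sub]; ring
    exact tendsto_nhds_unique (h1.congr' heventually) h2
  refine ⟨key, fun b hb => ?_⟩
  have h1 : c0inf.im = -c00.im := by rw [key]; simp
  have h2 : c0inf.im - c00.im = -(2 * Real.pi * b) := by
    have := congrArg Complex.im hb
    simpa using this
  rw [h1] at h2 ⊢
  linarith
end

section
/- Let b ∈ ℝ and ε > 0, and set α^± := ±iπ/√ε + iπb. Let Ψ be a holomorphic function on a horizontal strip S ⊆ ℂ admitting an absolutely convergent expansion Ψ(W) = W + c_0 + Σ_{n ∈ ℤ, n≠0} c_n e^{2πinW} on S, and define Ψ^U := Ψ and Ψ^L := T_{α^−} ∘ Ψ ∘ T_{α^+}, i.e. Ψ^L(W) = α^− + Ψ(W + α^+). Suppose the functional equation Ψ^U(conj(W) + 1/2) = conj(Ψ^L(W)) + 1/2 holds for all W in some nonempty open set on which both sides are defined (i.e. W + α^+ ∈ S and conj(W) + 1/2 ∈ S). Then the constant term satisfies Im(c_0) = −πb. -/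
open Complex

lemma conj_reflect_hasDerivAt {f : ℂ → ℂ} {f' z : ℂ}
    (h : HasDerivAt f f' ((starRingEnd ℂ) z)) :
    HasDerivAt (fun w => (starRingEnd ℂ) (f ((starRingEnd ℂ) w))) ((starRingEnd ℂ) f') z := by
  rw [hasDerivAt_iff_tendsto_slope] at h ⊢
  have hc : Filter.Tendsto (starRingEnd ℂ) (nhdsWithin z {z}ᶜ)
      (nhdsWithin ((starRingEnd ℂ) z) {(starRingEnd ℂ) z}ᶜ) := by
    rw [tendsto_nhdsWithin_iff]
    refine ⟨(continuous_conj.tendsto z).mono_left nhdsWithin_le_nhds, ?_⟩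
    filter_upwards [self_mem_nhdsWithin] with w hw
    exact fun h' => hw (by simpa using congrArg (starRingEnd ℂ) h')
  have key := (continuous_conj.tendsto f').comp (h.comp hc)
  refine key.congr fun w => ?_
  simp only [Function.comp_apply, slope_def_field, map_div₀, map_sub, Complex.conj_conj]

lemma conj_reflect_differentiableAt {f : ℂ → ℂ} {z : ℂ}
    (h : DifferentiableAt ℂ f ((starRingEnd ℂ) z)) :
    DifferentiableAt ℂ (fun w => (starRingEnd ℂ) (f ((starRingEnd ℂ) w))) z :=
  (conj_reflect_hasDerivAt h.hasDerivAt).differentiableAt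

/-- Glutsyuk case (`ε > 0`): let `α^± = ±iπ/√ε + iπb`, let `Ψ` be holomorphic on a
horizontal strip `S` with absolutely convergent expansion
`Ψ(W) = W + c₀ + Σ_{n ≠ 0} c_n e^{2πinW}`, and let `Ψ^U = Ψ`,
`Ψ^L = T_{α⁻} ∘ Ψ ∘ T_{α⁺}`. If the compatibility equation
`Ψ^U(conj W + 1/2) = conj (Ψ^L W) + 1/2` holds on a nonempty open set where both sides
are defined, then `Im c₀ = −πb`. -/
theorem glutsyuk_constant_term (b ε : ℝ) (hε : 0 < ε) (a₁ a₂ : ℝ)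
    (S : Set ℂ) (hS : S = {W : ℂ | a₁ < W.im ∧ W.im < a₂})
    (Ψ : ℂ → ℂ) (hΨ : DifferentiableOn ℂ Ψ S)
    (c : ℤ → ℂ)
    (hsum : ∀ W ∈ S,
      HasSum (fun n : ℤ => c n * Complex.exp (2 * (Real.pi : ℂ) * Complex.I * (n : ℂ) * W))
        (Ψ W - W))
    (αp αm : ℂ)
    (hαp : αp = (Real.pi : ℂ) * Complex.I / (Real.sqrt ε : ℂ) +
      (Real.pi : ℂ) * Complex.I * (b : ℂ))
    (hαm : αm = -((Real.pi : ℂ) * Complex.I / (Real.sqrt ε : ℂ)) +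
      (Real.pi : ℂ) * Complex.I * (b : ℂ))
    (O : Set ℂ) (hO : IsOpen O) (hOne : O.Nonempty)
    (hdom : ∀ W ∈ O, W + αp ∈ S ∧ (starRingEnd ℂ) W + 1 / 2 ∈ S)
    (heq : ∀ W ∈ O,
      Ψ ((starRingEnd ℂ) W + 1 / 2) = (starRingEnd ℂ) (αm + Ψ (W + αp)) + 1 / 2) :
    (c 0).im = -(Real.pi * b) := by
  obtain ⟨W₀, hW₀⟩ := hOne
  have hSopen : IsOpen S := by
    rw [hS]
    exact (isOpen_Ioo (a := a₁) (b := a₂)).preimage Complex.continuous_im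
  -- the strip on which both sides are defined
  set T : Set ℂ := Complex.im ⁻¹' (Set.Ioo a₁ a₂ ∩ Set.Ioo (αp.im - a₂) (αp.im - a₁)) with hT
  have hTopen : IsOpen T := ((isOpen_Ioo.inter isOpen_Ioo).preimage Complex.continuous_im)
  have hTpre : IsPreconnected T :=
    (((convex_Ioo a₁ a₂).inter (convex_Ioo _ _)).linear_preimage Complex.imLm).isPreconnected
  have hTS : ∀ w ∈ T, w + 1/2 ∈ S ∧ (starRingEnd ℂ) w + αp ∈ S := by
    intro w hw
    obtain ⟨⟨h1, h2⟩, h3, h4⟩ := hw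
    rw [hS]
    refine ⟨⟨?_, ?_⟩, ?_, ?_⟩
    · simpa using h1
    · simpa using h2
    · simp only [Set.mem_setOf_eq, Complex.add_im, Complex.conj_im]; linarith
    · simp only [Complex.add_im, Complex.conj_im]; linarith
  -- the two sides
  set A : ℂ → ℂ := fun w => Ψ (w + 1/2) with hAdef
  set B : ℂ → ℂ := fun w =>
    (starRingEnd ℂ) αm + (starRingEnd ℂ) (Ψ ((starRingEnd ℂ) w + αp)) + 1/2 with hBdef
  have hA : AnalyticOnNhd ℂ A T := by
    refine DifferentiableOn.analyticOnNhd (fun w hw => ?_) hTopen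
    exact (((hΨ.differentiableAt (hSopen.mem_nhds (hTS w hw).1)).comp w
      (differentiableAt_id.add_const _))).differentiableWithinAt
  have hB : AnalyticOnNhd ℂ B T := by
    refine DifferentiableOn.analyticOnNhd (fun w hw => ?_) hTopen
    have hψ : DifferentiableAt ℂ Ψ ((starRingEnd ℂ) w + αp) :=
      hΨ.differentiableAt (hSopen.mem_nhds (hTS w hw).2)
    have hg : DifferentiableAt ℂ (fun v => (starRingEnd ℂ) (Ψ ((starRingEnd ℂ) v)))
        (w + (starRingEnd ℂ) αp) := by
      apply conj_reflect_differentiableAt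
      simpa [map_add, Complex.conj_conj] using hψ
    have hcomp : DifferentiableAt ℂ
        (fun w => (starRingEnd ℂ) (Ψ ((starRingEnd ℂ) w + αp))) w := by
      have := hg.comp w (differentiableAt_id.add_const ((starRingEnd ℂ) αp))
      refine this.congr_of_eventuallyEq (Filter.Eventually.of_forall fun v => ?_)
      simp [Function.comp, map_add, Complex.conj_conj]
    exact ((hcomp.const_add _).add_const _).differentiableWithinAt
  -- the open set where A = B, in the w = conj W variable
  set O' : Set ℂ := (starRingEnd ℂ) ⁻¹' O with hO'def
  have hO'open : IsOpen O' := hO.preimage continuous_conj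
  have hz₀ : (starRingEnd ℂ) W₀ ∈ O' := by simp [hO'def, hW₀]
  have hO'T : O' ⊆ T := by
    intro w hw
    obtain ⟨hd1, hd2⟩ := hdom _ hw
    rw [Complex.conj_conj] at hd2
    rw [hS] at hd1 hd2
    obtain ⟨hb1, hb2⟩ := hd1
    obtain ⟨hc1, hc2⟩ := hd2
    simp only [Set.mem_setOf_eq, Complex.add_im, Complex.conj_im] at hb1 hb2 hc1 hc2
    have him : (1/2 : ℂ).im = 0 := by norm_num
    rw [him] at hc1 hc2
    refine ⟨⟨by linarith, by linarith⟩, by simp only [Set.mem_Ioo]; constructor <;> linarith⟩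
  have hEqO' : Set.EqOn A B O' := by
    intro w hw
    have h := heq _ hw
    rw [Complex.conj_conj] at h
    simp only [hAdef, hBdef]
    rw [h, map_add]
  have hAB : Set.EqOn A B T :=
    hA.eqOn_of_preconnected_of_eventuallyEq hB hTpre (hO'T hz₀)
      (Filter.eventuallyEq_of_mem (hO'open.mem_nhds hz₀) hEqO')
  have hKey : ∀ w ∈ T, Ψ (w + 1/2) =
      (starRingEnd ℂ) αm + (starRingEnd ℂ) (Ψ ((starRingEnd ℂ) w + αp)) + 1/2 :=
    fun w hw => hAB hw
  -- the series identity on T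
  have key : ∀ w ∈ T, HasSum (fun n : ℤ =>
      (starRingEnd ℂ) (c n * Complex.exp (2 * (Real.pi:ℂ) * I * (n:ℂ) * ((starRingEnd ℂ) w + αp)))
        - c n * Complex.exp (2 * (Real.pi:ℂ) * I * (n:ℂ) * (w + 1/2)))
      (2 * (Real.pi:ℂ) * I * (b:ℂ)) := by
    intro w hw
    obtain ⟨hw1, hw2⟩ := hTS w hw
    have h1 := hsum _ hw1
    have h2 := hsum _ hw2
    have h2c : HasSum (fun n : ℤ =>
        (starRingEnd ℂ) (c n * Complex.exp (2 * (Real.pi:ℂ) * I * (n:ℂ) * ((starRingEnd ℂ) w + αp))))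
        ((starRingEnd ℂ) (Ψ ((starRingEnd ℂ) w + αp) - ((starRingEnd ℂ) w + αp))) :=
      h2.map ((starRingEnd ℂ) : ℂ →+* ℂ).toAddMonoidHom continuous_conj
    have h3 := h2c.sub h1
    convert h3 using 1
    · rfl
    rw [hKey w hw]
    simp only [map_sub, map_add, Complex.conj_conj, hαp, hαm, map_mul, map_neg, map_div₀,
      Complex.conj_I, Complex.conj_ofReal, map_one, map_ofNat]
    ring
  -- fix the base point
  set z₀ : ℂ := (starRingEnd ℂ) W₀ with hz₀def
  have hz₀T : z₀ ∈ T := hO'T hz₀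
  have hT_t : ∀ t : ℝ, z₀ + (t:ℂ) ∈ T := by
    intro t
    obtain ⟨⟨h1, h2⟩, h3, h4⟩ := hz₀T
    exact ⟨⟨by simpa using h1, by simpa using h2⟩, by simpa using h3, by simpa using h4⟩
  set F : ℤ → ℝ → ℂ := fun n t =>
    (starRingEnd ℂ) (c n * Complex.exp (2 * (Real.pi:ℂ) * I * (n:ℂ) *
        ((starRingEnd ℂ) (z₀ + (t:ℂ)) + αp)))
      - c n * Complex.exp (2 * (Real.pi:ℂ) * I * (n:ℂ) * ((z₀ + (t:ℂ)) + 1/2)) with hFdef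
  have key2 : ∀ t : ℝ, HasSum (fun n => F n t) (2 * (Real.pi:ℂ) * I * (b:ℂ)) :=
    fun t => key _ (hT_t t)
  -- separated-variables form
  set P : ℤ → ℂ := fun n => (starRingEnd ℂ) (c n) *
    Complex.exp (-(2 * (Real.pi:ℂ) * I * (n:ℂ)) * (z₀ + (starRingEnd ℂ) αp)) with hPdef
  set Q : ℤ → ℂ := fun n => c n *
    Complex.exp ((2 * (Real.pi:ℂ) * I * (n:ℂ)) * (z₀ + 1/2)) with hQdef
  have hF : ∀ n t, F n t = P n * Complex.exp (-(2 * (Real.pi:ℂ) * I * (n:ℂ)) * (t:ℂ))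
      - Q n * Complex.exp ((2 * (Real.pi:ℂ) * I * (n:ℂ)) * (t:ℂ)) := by
    intro n t
    have e1 : (starRingEnd ℂ) (2 * (Real.pi:ℂ) * I * (n:ℂ) * ((starRingEnd ℂ) (z₀ + (t:ℂ)) + αp))
        = -(2 * (Real.pi:ℂ) * I * (n:ℂ)) * (z₀ + (starRingEnd ℂ) αp)
          + -(2 * (Real.pi:ℂ) * I * (n:ℂ)) * (t:ℂ) := by
      simp only [map_mul, map_add, Complex.conj_conj, Complex.conj_I, Complex.conj_ofReal,
        map_ofNat, map_intCast]
      ring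
    have e2 : 2 * (Real.pi:ℂ) * I * (n:ℂ) * ((z₀ + (t:ℂ)) + 1/2)
        = (2 * (Real.pi:ℂ) * I * (n:ℂ)) * (z₀ + 1/2)
          + (2 * (Real.pi:ℂ) * I * (n:ℂ)) * (t:ℂ) := by ring
    show (starRingEnd ℂ) (c n * Complex.exp (2 * (Real.pi:ℂ) * I * (n:ℂ) *
        ((starRingEnd ℂ) (z₀ + (t:ℂ)) + αp)))
      - c n * Complex.exp (2 * (Real.pi:ℂ) * I * (n:ℂ) * ((z₀ + (t:ℂ)) + 1/2)) = _
    rw [map_mul, ← Complex.exp_conj, e1, e2, Complex.exp_add, Complex.exp_add, hPdef, hQdef]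
    ring
  have hre : ∀ (n : ℤ) (t : ℝ), ((2 * (Real.pi:ℂ) * I * (n:ℂ)) * (t:ℂ)).re = 0 := by
    intro n t
    have h : (2 * (Real.pi:ℂ) * I * (n:ℂ)) * (t:ℂ) = ((2 * Real.pi * n * t : ℝ) : ℂ) * I := by
      push_cast; ring
    rw [h]; simp
  have habs2 : ∀ (n : ℤ) (t : ℝ),
      ‖Complex.exp ((2 * (Real.pi:ℂ) * I * (n:ℂ)) * (t:ℂ))‖ = 1 := by
    intro n t
    rw [Complex.norm_exp, hre n t, Real.exp_zero]
  have habs1 : ∀ (n : ℤ) (t : ℝ),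
      ‖Complex.exp (-(2 * (Real.pi:ℂ) * I * (n:ℂ)) * (t:ℂ))‖ = 1 := by
    intro n t
    rw [Complex.norm_exp, neg_mul, Complex.neg_re, hre n t, neg_zero,
      Real.exp_zero]
  -- integrability
  set μ : MeasureTheory.Measure ℝ := MeasureTheory.volume.restrict (Set.Ioc (0:ℝ) 1) with hμ
  have hcexp : ∀ k : ℂ, Continuous (fun t : ℝ => Complex.exp (k * (t:ℂ))) :=
    fun k => Complex.continuous_exp.comp (continuous_const.mul Complex.continuous_ofReal)
  have hcont : ∀ n : ℤ, Continuous (F n) := by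
    intro n
    have : F n = fun t : ℝ => P n * Complex.exp (-(2 * (Real.pi:ℂ) * I * (n:ℂ)) * (t:ℂ))
        - Q n * Complex.exp ((2 * (Real.pi:ℂ) * I * (n:ℂ)) * (t:ℂ)) := funext (hF n)
    rw [this]
    exact ((continuous_const.mul (hcexp _)).sub (continuous_const.mul (hcexp _)))
  have hint : ∀ n : ℤ, MeasureTheory.Integrable (F n) μ := fun n => (hcont n).integrableOn_Ioc
  -- summability of the integrals of norms
  have hPe : ∀ n : ℤ, P n = (starRingEnd ℂ)
      (c n * Complex.exp (2 * (Real.pi:ℂ) * I * (n:ℂ) * ((starRingEnd ℂ) z₀ + αp))) := by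
    intro n
    rw [hPdef, map_mul, ← Complex.exp_conj]
    congr 2
    simp only [map_mul, map_add, Complex.conj_conj, Complex.conj_I, Complex.conj_ofReal,
      map_ofNat, map_intCast]
    ring
  have hSumP : Summable (fun n : ℤ => ‖P n‖) := by
    have hs := ((hsum _ (hTS z₀ hz₀T).2).summable).norm
    refine hs.congr fun n => ?_
    rw [hPe n, RCLike.norm_conj]
  have hSumQ : Summable (fun n : ℤ => ‖Q n‖) :=
    ((hsum _ (hTS z₀ hz₀T).1).summable).norm
  have hFbound : ∀ (n : ℤ) (t : ℝ), ‖F n t‖ ≤ ‖P n‖ + ‖Q n‖ := by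
    intro n t
    rw [hF n t]
    refine (norm_sub_le _ _).trans ?_
    simp only [norm_mul, habs1, habs2, mul_one, le_refl]
  have hIntNorm : Summable (fun n : ℤ => ∫ t, ‖F n t‖ ∂μ) := by
    refine Summable.of_nonneg_of_le
      (fun n => MeasureTheory.integral_nonneg fun t => norm_nonneg _)
      (fun n => ?_) (hSumP.add hSumQ)
    have hle : ∫ t, ‖F n t‖ ∂μ ≤ ∫ _t, (‖P n‖ + ‖Q n‖) ∂μ :=
      MeasureTheory.integral_mono ((hint n).norm) (MeasureTheory.integrable_const _)
        (fun t => hFbound n t)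
    calc ∫ t, ‖F n t‖ ∂μ ≤ ∫ _t, (‖P n‖ + ‖Q n‖) ∂μ := hle
      _ = ‖P n‖ + ‖Q n‖ := by
        rw [hμ, MeasureTheory.integral_const]
        simp [Real.volume_Ioc]
  have hmain := MeasureTheory.hasSum_integral_of_summable_integral_norm hint hIntNorm
  -- value of the right-hand side
  have hRHS : (∫ t, (∑' n, F n t) ∂μ) = 2 * (Real.pi:ℂ) * I * (b:ℂ) := by
    rw [MeasureTheory.integral_congr_ae
      (Filter.Eventually.of_forall fun t => (key2 t).tsum_eq)]
    rw [hμ, MeasureTheory.integral_const]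
    simp [Real.volume_Ioc]
  -- the individual integrals
  have hk0 : ∀ n : ℤ, n ≠ 0 → (2 * (Real.pi:ℂ) * I * (n:ℂ)) ≠ 0 := by
    intro n hn
    exact mul_ne_zero (mul_ne_zero (mul_ne_zero two_ne_zero
      (Complex.ofReal_ne_zero.mpr Real.pi_ne_zero)) Complex.I_ne_zero)
      (Int.cast_ne_zero.mpr hn)
  have hexp_int : ∀ n : ℤ, Complex.exp (2 * (Real.pi:ℂ) * I * (n:ℂ)) = 1 := by
    intro n
    have h : (2 * (Real.pi:ℂ) * I * (n:ℂ)) = (n:ℂ) * (2 * (Real.pi:ℂ) * I) := by ring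
    rw [h]; exact Complex.exp_int_mul_two_pi_mul_I n
  have hIzero : ∀ k : ℂ, k ≠ 0 → Complex.exp k = 1 →
      (∫ t in Set.Ioc (0:ℝ) 1, Complex.exp (k * (t:ℂ))) = 0 := by
    intro k hk h1
    rw [← intervalIntegral.integral_of_le (by norm_num : (0:ℝ) ≤ 1),
      integral_exp_mul_complex hk]
    simp [h1]
  have hInt_n : ∀ n : ℤ, n ≠ 0 → (∫ t, F n t ∂μ) = 0 := by
    intro n hn
    have e1 : (∫ t in Set.Ioc (0:ℝ) 1,
        Complex.exp (-(2 * (Real.pi:ℂ) * I * (n:ℂ)) * (t:ℂ))) = 0 := by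
      refine hIzero _ (neg_ne_zero.mpr (hk0 n hn)) ?_
      rw [Complex.exp_neg, hexp_int n]; norm_num
    have e2 : (∫ t in Set.Ioc (0:ℝ) 1,
        Complex.exp ((2 * (Real.pi:ℂ) * I * (n:ℂ)) * (t:ℂ))) = 0 :=
      hIzero _ (hk0 n hn) (hexp_int n)
    have hInt1 : MeasureTheory.Integrable
        (fun t : ℝ => P n * Complex.exp (-(2 * (Real.pi:ℂ) * I * (n:ℂ)) * (t:ℂ))) μ :=
      (continuous_const.mul (hcexp _)).integrableOn_Ioc
    have hInt2 : MeasureTheory.Integrable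
        (fun t : ℝ => Q n * Complex.exp ((2 * (Real.pi:ℂ) * I * (n:ℂ)) * (t:ℂ))) μ :=
      (continuous_const.mul (hcexp _)).integrableOn_Ioc
    calc (∫ t, F n t ∂μ)
        = ∫ t, (P n * Complex.exp (-(2 * (Real.pi:ℂ) * I * (n:ℂ)) * (t:ℂ))
          - Q n * Complex.exp ((2 * (Real.pi:ℂ) * I * (n:ℂ)) * (t:ℂ))) ∂μ :=
          MeasureTheory.integral_congr_ae (Filter.Eventually.of_forall fun t => hF n t)
      _ = P n * (∫ t, Complex.exp (-(2 * (Real.pi:ℂ) * I * (n:ℂ)) * (t:ℂ)) ∂μ)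
          - Q n * (∫ t, Complex.exp ((2 * (Real.pi:ℂ) * I * (n:ℂ)) * (t:ℂ)) ∂μ) := by
          rw [MeasureTheory.integral_sub hInt1 hInt2, MeasureTheory.integral_const_mul,
            MeasureTheory.integral_const_mul]
      _ = 0 := by rw [← hμ] at e1 e2; rw [e1, e2]; ring
  have hInt_0 : (∫ t, F 0 t ∂μ) = (starRingEnd ℂ) (c 0) - c 0 := by
    have h0 : ∀ t : ℝ, F 0 t = (starRingEnd ℂ) (c 0) - c 0 := by
      intro t
      rw [hF 0 t]
      simp [hPdef, hQdef]
    rw [MeasureTheory.integral_congr_ae (Filter.Eventually.of_forall h0), hμ,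
      MeasureTheory.integral_const]
    simp [Real.volume_Ioc]
  -- conclude
  have hfun : (fun n : ℤ => ∫ t, F n t ∂μ)
      = fun n : ℤ => if n = 0 then (starRingEnd ℂ) (c 0) - c 0 else 0 := by
    funext n
    by_cases hn : n = 0
    · subst hn; simp [hInt_0]
    · simp [hn, hInt_n n hn]
  rw [hRHS] at hmain
  have hmain' : HasSum (fun n : ℤ => if n = 0 then (starRingEnd ℂ) (c 0) - c 0 else 0)
      (2 * (Real.pi:ℂ) * I * (b:ℂ)) := by
    rw [← hfun]; exact hmain
  have hfinal : (starRingEnd ℂ) (c 0) - c 0 = 2 * (Real.pi:ℂ) * I * (b:ℂ) :=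
    (hasSum_ite_eq (0 : ℤ) _).unique hmain'
  have him := congrArg Complex.im hfinal
  simp only [Complex.sub_im, Complex.conj_im] at him
  have hrhs_im : (2 * (Real.pi:ℂ) * I * (b:ℂ)).im = 2 * Real.pi * b := by
    have h : 2 * (Real.pi:ℂ) * I * (b:ℂ) = ((2 * Real.pi * b : ℝ) : ℂ) * I := by
      push_cast; ring
    rw [h]; simp
  rw [hrhs_im] at him
  linarith
end

section
/- Let M ∈ ℝ and let Ψ be a function on H_M = {W : Im W > M} of the form Ψ(W) = W + c_0 + Σ_{n=1}^∞ c_n e^{2πinW} (absolutely convergent on H_M), and suppose Ψ is not a translation, i.e. c_n ≠ 0 for some n ≥ 1. If m, m' ∈ ℂ are such that Im m ≥ 0 and Ψ(W + m) = Ψ(W) + m' for all W ∈ H_M, then m = m' and m is a rational real number; more precisely, n·m ∈ ℤ for every n ≥ 1 with c_n ≠ 0. -/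
open Complex

lemma my_small_eq_zero {x E ρ : ℝ} (hx : 0 ≤ x) (hE : 0 ≤ E) (hρ : 0 < ρ)
    (h : ∀ q : ℝ, 0 < q → q < ρ → x ≤ q / ρ * E) : x = 0 := by
  by_contra hx0
  have hx' : 0 < x := lt_of_le_of_ne hx (Ne.symm hx0)
  set q := min (ρ/2) (ρ * x / (2*(E+1))) with hqdef
  have hq0 : 0 < q := lt_min (by positivity) (by positivity)
  have hqρ : q < ρ := lt_of_le_of_lt (min_le_left _ _) (by linarith)
  have h1 := h q hq0 hqρ
  have h2 : q ≤ ρ * x / (2*(E+1)) := min_le_right _ _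
  have h1' : x * ρ ≤ q * E := by
    rw [div_mul_eq_mul_div, le_div_iff₀ hρ] at h1; linarith
  have h2' : q * (2*(E+1)) ≤ ρ * x := by
    rw [← le_div_iff₀ (by positivity)]; exact h2
  nlinarith [mul_pos hρ hx', mul_nonneg hq0.le hE]

lemma my_coeff_zero (r : ℝ) (hr : 0 < r) (d : ℕ → ℂ)
    (h : ∀ q : ℝ, 0 < q → q < r → HasSum (fun n => d n * (q : ℂ) ^ n) 0) :
    ∀ n, d n = 0 := by
  set ρ := r / 2 with hρdef
  have hρ : 0 < ρ := by positivity
  have hρr : ρ < r := by rw [hρdef]; linarith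
  have hS : Summable (fun n => ‖d n‖ * ρ ^ n) := by
    have h1 : Summable (fun n => d n * (ρ : ℂ) ^ n) := (h ρ hρ hρr).summable
    have h2 : Summable (fun n => ‖d n * (ρ : ℂ) ^ n‖) := summable_norm_iff.mpr h1
    refine h2.congr fun n => ?_
    rw [norm_mul, norm_pow, Complex.norm_real, Real.norm_of_nonneg hρ.le]
  intro N
  induction N using Nat.strong_induction_on with
  | _ N ih =>
  -- tail summability
  have hS1 : Summable (fun n => ‖d (n + 1 + N)‖ * ρ ^ (n + 1 + N)) := by
    have := (summable_nat_add_iff (f := fun n => ‖d n‖ * ρ ^ n) (N + 1)).mpr hS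
    refine this.congr fun n => ?_
    have hn : n + (N + 1) = n + 1 + N := by omega
    rw [hn]
  have hS2 : Summable (fun n => ‖d (n + 1 + N)‖ * ρ ^ (n + 1)) := by
    have := hS1.mul_left ((ρ ^ N)⁻¹)
    refine this.congr fun n => ?_
    have : ρ ^ (n + 1 + N) = ρ ^ (n + 1) * ρ ^ N := by rw [← pow_add]
    rw [this]
    field_simp
  set E := ∑' n, ‖d (n + 1 + N)‖ * ρ ^ (n + 1) with hEdef
  have hE0 : 0 ≤ E := tsum_nonneg fun n => by positivity
  have key : ∀ q : ℝ, 0 < q → q < ρ → ‖d N‖ ≤ q / ρ * E := by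
    intro q hq hqρ
    have hqr : q < r := hqρ.trans hρr
    have h1 := h q hq hqr
    have hzero : ∑ i ∈ Finset.range N, d i * (q : ℂ) ^ i = 0 :=
      Finset.sum_eq_zero fun i hi => by rw [ih i (Finset.mem_range.mp hi)]; ring
    have h2 : HasSum (fun n => d (n + N) * (q : ℂ) ^ (n + N)) 0 :=
      (hasSum_nat_add_iff (f := fun n => d n * (q : ℂ) ^ n) N).mpr (by
        rw [hzero, add_zero]; exact h1)
    have h3 : (0 : ℂ) = d N * (q : ℂ) ^ N + ∑' n, d (n + 1 + N) * (q : ℂ) ^ (n + 1 + N) := by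
      have := Summable.tsum_eq_zero_add h2.summable
      rw [h2.tsum_eq] at this
      simpa using this
    -- norm summability of the q-tail
    have hb : ∀ n : ℕ, ‖d (n + 1 + N) * (q : ℂ) ^ (n + 1 + N)‖ ≤
        q / ρ * q ^ N * (‖d (n + 1 + N)‖ * ρ ^ (n + 1)) := by
      intro n
      rw [norm_mul, norm_pow, Complex.norm_real, Real.norm_of_nonneg hq.le]
      have hpow : q ^ (n + 1 + N) ≤ q / ρ * q ^ N * ρ ^ (n + 1) := by
        have hqn : q ^ n ≤ ρ ^ n := pow_le_pow_left₀ hq.le hqρ.le n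
        have : q / ρ * q ^ N * ρ ^ (n + 1) = q ^ N * q * ρ ^ n := by
          field_simp; ring
        rw [this, pow_add, pow_add, pow_one]
        calc q ^ n * q * q ^ N = q ^ N * q * q ^ n := by ring
        _ ≤ q ^ N * q * ρ ^ n := by
            apply mul_le_mul_of_nonneg_left hqn (by positivity)
      calc ‖d (n + 1 + N)‖ * q ^ (n + 1 + N)
          ≤ ‖d (n + 1 + N)‖ * (q / ρ * q ^ N * ρ ^ (n + 1)) :=
            mul_le_mul_of_nonneg_left hpow (norm_nonneg _)
        _ = q / ρ * q ^ N * (‖d (n + 1 + N)‖ * ρ ^ (n + 1)) := by ring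
    have hSq : Summable (fun n => ‖d (n + 1 + N) * (q : ℂ) ^ (n + 1 + N)‖) :=
      Summable.of_nonneg_of_le (fun n => norm_nonneg _) hb (hS2.mul_left _)
    have h4 : ‖d N‖ * q ^ N ≤ q / ρ * q ^ N * E := by
      have hnorm : ‖d N * (q : ℂ) ^ N‖ = ‖d N‖ * q ^ N := by
        rw [norm_mul, norm_pow, Complex.norm_real, Real.norm_of_nonneg hq.le]
      have heq : d N * (q : ℂ) ^ N = -(∑' n, d (n + 1 + N) * (q : ℂ) ^ (n + 1 + N)) := by
        rw [eq_neg_iff_add_eq_zero]; exact h3.symm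
      calc ‖d N‖ * q ^ N = ‖d N * (q : ℂ) ^ N‖ := hnorm.symm
        _ = ‖∑' n, d (n + 1 + N) * (q : ℂ) ^ (n + 1 + N)‖ := by rw [heq, norm_neg]
        _ ≤ ∑' n, ‖d (n + 1 + N) * (q : ℂ) ^ (n + 1 + N)‖ := norm_tsum_le_tsum_norm hSq
        _ ≤ ∑' n, q / ρ * q ^ N * (‖d (n + 1 + N)‖ * ρ ^ (n + 1)) :=
            Summable.tsum_le_tsum hb hSq (hS2.mul_left _)
        _ = q / ρ * q ^ N * E := by rw [tsum_mul_left]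
    have hqN : (0 : ℝ) < q ^ N := by positivity
    calc ‖d N‖ = ‖d N‖ * q ^ N / q ^ N := by field_simp
      _ ≤ q / ρ * q ^ N * E / q ^ N := by gcongr
      _ = q / ρ * E := by field_simp
  have := my_small_eq_zero (norm_nonneg (d N)) hE0 hρ key
  exact norm_eq_zero.mp this

/-- Symmetry lemma: if `Ψ(W) = W + c₀ + Σ_{n≥1} c_n e^{2πinW}` on `{Im W > M}` is not a
translation (some `c_n ≠ 0`, `n ≥ 1`) and `Ψ(W + m) = Ψ(W) + m'` with `Im m ≥ 0`, then
`m = m'`, `m` is a rational real number, and `n·m ∈ ℤ` for every `n ≥ 1` with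
`c_n ≠ 0`. -/
theorem symmetry_lemma (M : ℝ) (Ψ : ℂ → ℂ) (c : ℕ → ℂ)
    (hsum : ∀ W : ℂ, M < W.im →
      HasSum (fun n : ℕ =>
          c (n + 1) * Complex.exp (2 * (Real.pi : ℂ) * Complex.I * ((n : ℂ) + 1) * W))
        (Ψ W - W - c 0))
    (hne : ∃ n : ℕ, 1 ≤ n ∧ c n ≠ 0)
    (m m' : ℂ) (him : 0 ≤ m.im)
    (hcom : ∀ W : ℂ, M < W.im → Ψ (W + m) = Ψ W + m') :
    m = m' ∧ m.im = 0 ∧ (∃ q : ℚ, m = (q : ℂ)) ∧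
    (∀ n : ℕ, 1 ≤ n → c n ≠ 0 → ∃ k : ℤ, (n : ℂ) * m = (k : ℂ)) := by
  classical
  set d : ℕ → ℂ := fun k =>
    if k = 0 then m - m'
    else c k * (Complex.exp (2 * (Real.pi : ℂ) * Complex.I * (k : ℂ) * m) - 1) with hddef
  have hπ : (Real.pi : ℂ) ≠ 0 := Complex.ofReal_ne_zero.mpr Real.pi_ne_zero
  set r : ℝ := Real.exp (-(2 * Real.pi * M)) with hrdef
  have hr : 0 < r := Real.exp_pos _
  have hmain : ∀ q : ℝ, 0 < q → q < r → HasSum (fun n => d n * (q : ℂ) ^ n) 0 := by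
    intro q hq hqr
    set t : ℝ := -(Real.log q) / (2 * Real.pi) with htdef
    set W : ℂ := (t : ℂ) * Complex.I with hWdef
    have hWim : W.im = t := by simp [hWdef]
    have hlog : Real.log q < -(2 * Real.pi * M) := by
      rw [← Real.exp_lt_exp, Real.exp_log hq]; exact hqr
    have hW : M < W.im := by
      rw [hWim, htdef]
      rw [lt_div_iff₀ (by positivity)]
      nlinarith [Real.pi_pos]
    have hWm : M < (W + m).im := by
      rw [Complex.add_im]; linarith
    have hexp : ∀ n : ℕ,
        Complex.exp (2 * (Real.pi : ℂ) * Complex.I * ((n : ℂ) + 1) * W) = (q : ℂ) ^ (n + 1) := by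
      intro n
      have harg : 2 * (Real.pi : ℂ) * Complex.I * ((n : ℂ) + 1) * W
          = ((n + 1 : ℕ) : ℂ) * (Real.log q : ℂ) := by
        rw [hWdef, htdef]
        push_cast
        have hI : (Complex.I) ^ 2 = -1 := Complex.I_sq
        field_simp
        linear_combination (-(Real.log q : ℂ)) * hI
      rw [harg, Complex.exp_nat_mul, ← Complex.ofReal_exp, Real.exp_log hq]
    have h1 := hsum W hW
    have h2 := hsum (W + m) hWm
    have h3 := h2.sub h1
    have hΨ : Ψ (W + m) - (W + m) - c 0 - (Ψ W - W - c 0) = m' - m := by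
      rw [hcom W hW]; ring
    rw [hΨ] at h3
    have heq : (fun n : ℕ =>
        c (n + 1) * Complex.exp (2 * (Real.pi : ℂ) * Complex.I * ((n : ℂ) + 1) * (W + m)) -
        c (n + 1) * Complex.exp (2 * (Real.pi : ℂ) * Complex.I * ((n : ℂ) + 1) * W))
        = fun n : ℕ => d (n + 1) * (q : ℂ) ^ (n + 1) := by
      funext n
      have he := hexp n
      rw [hddef]
      simp only [Nat.succ_ne_zero, if_false]
      have hsplit : 2 * (Real.pi : ℂ) * Complex.I * ((n : ℂ) + 1) * (W + m)
          = 2 * (Real.pi : ℂ) * Complex.I * ((n : ℂ) + 1) * W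
            + 2 * (Real.pi : ℂ) * Complex.I * ((n : ℂ) + 1) * m := by ring
      rw [hsplit, Complex.exp_add, he]
      push_cast
      ring
    rw [heq] at h3
    have h5 := (hasSum_nat_add_iff (f := fun n => d n * (q : ℂ) ^ n) 1).mp h3
    have hsum0 : (m' - m) + ∑ i ∈ Finset.range 1, d i * (q : ℂ) ^ i = 0 := by
      simp [hddef]
    rw [hsum0] at h5
    exact h5
  have hd := my_coeff_zero r hr d hmain
  have hm : m = m' := by
    have h0 := hd 0
    rw [hddef] at h0
    simp only [if_pos rfl] at h0
    exact sub_eq_zero.mp h0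
  have hint : ∀ n : ℕ, 1 ≤ n → c n ≠ 0 → ∃ k : ℤ, (n : ℂ) * m = (k : ℂ) := by
    intro n hn hc
    have hdn := hd n
    have hn0 : n ≠ 0 := by omega
    rw [hddef] at hdn
    simp only [if_neg hn0] at hdn
    have h6 : Complex.exp (2 * (Real.pi : ℂ) * Complex.I * (n : ℂ) * m) = 1 := by
      rcases mul_eq_zero.mp hdn with h | h
      · exact absurd h hc
      · exact sub_eq_zero.mp h
    obtain ⟨k, hk⟩ := Complex.exp_eq_one_iff.mp h6
    refine ⟨k, ?_⟩
    have h2πI : (2 * (Real.pi : ℂ) * Complex.I) ≠ 0 := by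
      simp [hπ, Complex.I_ne_zero]
    apply mul_left_cancel₀ h2πI
    linear_combination hk
  obtain ⟨n₀, hn₀, hcn₀⟩ := hne
  obtain ⟨k, hk⟩ := hint n₀ hn₀ hcn₀
  have hn0c : ((n₀ : ℚ) : ℂ) ≠ 0 := by
    simp only [Rat.cast_natCast, Nat.cast_ne_zero]
    omega
  have hqq : m = (((k : ℚ) / (n₀ : ℚ) : ℚ) : ℂ) := by
    push_cast
    rw [eq_div_iff (by push_cast at hn0c ⊢; exact hn0c)]
    linear_combination hk
  refine ⟨hm, ?_, ⟨(k : ℚ) / (n₀ : ℚ), hqq⟩, hint⟩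
  rw [hqq]
  simp
end
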